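/- arXiv:1904.01181 — 2 statements merged into one kernel-verified Lean document; each statement's English description precedes it below -/
import Mathlib

section
/- If (a,b) is a Golay complementary pair of length N with equal energies ρ_a(0) = ρ_b(0) = E, then for every z on the complex unit circle, |A(z)|^2 ≤ 2E, where A(z) is the polynomial of a. Consequently the peak-to-average power ratio of the OFDM signal generated by a is at most 2 (i.e., 3 dB). -/
open Complex Finset

/-- Polynomial A(z) = Σ_{i<N} a_i z^i of a length-N sequence. -/
noncomputable def poly (N : ℕ) (a : ℕ → ℂ) (z : ℂ) : ℂ :=
  ∑ i ∈ Finset.range N, a i * z ^ i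

/-- Aperiodic autocorrelation ρ_a(k) for k ≥ 0. -/
noncomputable def acorr (N : ℕ) (a : ℕ → ℂ) (k : ℕ) : ℂ :=
  ∑ i ∈ Finset.range (N - k), (starRingEnd ℂ) (a i) * a (i + k)

/-- (a,b) is a Golay complementary pair of length N. -/
def IsGCP (N : ℕ) (a b : ℕ → ℂ) : Prop :=
  ∀ k : ℕ, 0 < k → acorr N a k + acorr N b k = 0

lemma expand (N : ℕ) (a : ℕ → ℂ) (z : ℂ) (hz : z * (starRingEnd ℂ) z = 1) :
    (starRingEnd ℂ) (poly N a z) * poly N a z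
      = (∑ k ∈ range N, acorr N a k * z ^ k)
        + (starRingEnd ℂ) (∑ k ∈ Ico 1 N, acorr N a k * z ^ k) := by
  set w := (starRingEnd ℂ) z with hw
  set g : ℕ × ℕ → ℂ := fun p => (starRingEnd ℂ) (a p.2) * a p.1 * (z ^ p.1 * w ^ p.2) with hg
  have hzw : ∀ m : ℕ, z ^ m * w ^ m = 1 := by
    intro m; rw [← mul_pow, hz, one_pow]
  have hprod : (starRingEnd ℂ) (poly N a z) * poly N a z
      = ∑ p ∈ (range N ×ˢ range N), g p := by
    rw [Finset.sum_product]
    simp only [poly, map_sum, map_mul, map_pow, Finset.sum_mul_sum, hg, ← hw]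
    rw [Finset.sum_comm]
    exact Finset.sum_congr rfl fun j _ => Finset.sum_congr rfl fun i _ => by ring
  have h1 : ∑ p ∈ (range N ×ˢ range N).filter (fun p => p.2 ≤ p.1), g p
      = ∑ k ∈ range N, acorr N a k * z ^ k := by
    have hrhs : ∑ k ∈ range N, acorr N a k * z ^ k
        = ∑ p ∈ (range N).sigma (fun k => range (N - k)),
            ((starRingEnd ℂ) (a p.2) * a (p.2 + p.1)) * z ^ p.1 := by
      rw [Finset.sum_sigma]
      simp only [acorr, Finset.sum_mul]
    rw [hrhs]
    refine Finset.sum_nbij' (fun p => (⟨p.1 - p.2, p.2⟩ : Σ _ : ℕ, ℕ))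
      (fun q => (q.2 + q.1, q.2)) ?_ ?_ ?_ ?_ ?_
    · rintro ⟨i, j⟩ hp
      simp only [Finset.mem_filter, Finset.mem_product, Finset.mem_range] at hp
      simp only [Finset.mem_sigma, Finset.mem_range]
      omega
    · rintro ⟨k, m⟩ hq
      simp only [Finset.mem_sigma, Finset.mem_range] at hq
      simp only [Finset.mem_filter, Finset.mem_product, Finset.mem_range]
      omega
    · rintro ⟨i, j⟩ hp
      simp only [Finset.mem_filter, Finset.mem_product, Finset.mem_range] at hp
      dsimp only
      rw [show j + (i - j) = i by omega]
    · rintro ⟨k, m⟩ hq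
      simp only [Finset.mem_sigma, Finset.mem_range] at hq
      dsimp only
      rw [show m + k - m = k by omega]
    · rintro ⟨i, j⟩ hp
      simp only [Finset.mem_filter, Finset.mem_product, Finset.mem_range] at hp
      obtain ⟨⟨hi, hj⟩, hle⟩ := hp
      simp only [hg]
      rw [show j + (i - j) = i by omega]
      have hzp : z ^ i * w ^ j = z ^ (i - j) := by
        have hsplit : z ^ i = z ^ (i - j) * z ^ j := by rw [← pow_add]; congr 1; omega
        calc z ^ i * w ^ j = (z ^ j * w ^ j) * z ^ (i - j) := by rw [hsplit]; ring
        _ = z ^ (i - j) := by rw [hzw, one_mul]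
      rw [hzp]
  have h2 : ∑ p ∈ (range N ×ˢ range N).filter (fun p => ¬ p.2 ≤ p.1), g p
      = (starRingEnd ℂ) (∑ k ∈ Ico 1 N, acorr N a k * z ^ k) := by
    have hconj : (starRingEnd ℂ) (∑ k ∈ Ico 1 N, acorr N a k * z ^ k)
        = ∑ p ∈ (Ico 1 N).sigma (fun k => range (N - k)),
            (a p.2 * (starRingEnd ℂ) (a (p.2 + p.1))) * w ^ p.1 := by
      rw [Finset.sum_sigma]
      simp only [map_sum, map_mul, map_pow, acorr, Finset.sum_mul, ← hw]
      simp
    rw [hconj]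
    refine Finset.sum_nbij' (fun p => (⟨p.2 - p.1, p.1⟩ : Σ _ : ℕ, ℕ))
      (fun q => (q.2, q.2 + q.1)) ?_ ?_ ?_ ?_ ?_
    · rintro ⟨i, j⟩ hp
      simp only [Finset.mem_filter, Finset.mem_product, Finset.mem_range] at hp
      simp only [Finset.mem_sigma, Finset.mem_range, Finset.mem_Ico]
      omega
    · rintro ⟨k, m⟩ hq
      simp only [Finset.mem_sigma, Finset.mem_range, Finset.mem_Ico] at hq
      simp only [Finset.mem_filter, Finset.mem_product, Finset.mem_range]
      omega
    · rintro ⟨i, j⟩ hp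
      simp only [Finset.mem_filter, Finset.mem_product, Finset.mem_range] at hp
      dsimp only
      rw [show i + (j - i) = j by omega]
    · rintro ⟨k, m⟩ hq
      simp only [Finset.mem_sigma, Finset.mem_range, Finset.mem_Ico] at hq
      dsimp only
      rw [show m + k - m = k by omega]
    · rintro ⟨i, j⟩ hp
      simp only [Finset.mem_filter, Finset.mem_product, Finset.mem_range] at hp
      obtain ⟨⟨hi, hj⟩, hlt⟩ := hp
      simp only [hg]
      rw [show i + (j - i) = j by omega]
      have hzp : z ^ i * w ^ j = w ^ (j - i) := by
        have hsplit : w ^ j = w ^ (j - i) * w ^ i := by rw [← pow_add]; congr 1; omega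
        calc z ^ i * w ^ j = (z ^ i * w ^ i) * w ^ (j - i) := by rw [hsplit]; ring
        _ = w ^ (j - i) := by rw [hzw, one_mul]
      rw [hzp]; ring
  rw [hprod, ← Finset.sum_filter_add_sum_filter_not (range N ×ˢ range N)
      (fun p => p.2 ≤ p.1), h1, h2]

theorem gcp_papr_le_two (N : ℕ) (a b : ℕ → ℂ) (E : ℝ) (h : IsGCP N a b)
    (ha : acorr N a 0 = (E : ℂ)) (hb : acorr N b 0 = (E : ℂ)) :
    ∀ z : ℂ, ‖z‖ = 1 → ‖poly N a z‖ ^ 2 ≤ 2 * E := by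
  intro z hz
  have hz1 : z * (starRingEnd ℂ) z = 1 := by
    rw [Complex.mul_conj]
    norm_cast
    simp [Complex.normSq_eq_norm_sq, hz]
  rcases Nat.eq_zero_or_pos N with hN | hN
  · subst hN
    have hE : E = 0 := by
      have : (E : ℂ) = 0 := by rw [← ha]; simp [acorr]
      exact_mod_cast this
    simp [poly, hE]
  · have hIco : ∀ k ∈ Ico 1 N, acorr N a k * z ^ k + acorr N b k * z ^ k = 0 := by
      intro k hk
      rw [Finset.mem_Ico] at hk
      rw [← add_mul, h k hk.1, zero_mul]
    have hsum : (starRingEnd ℂ) (poly N a z) * poly N a z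
        + (starRingEnd ℂ) (poly N b z) * poly N b z = 2 * (E : ℂ) := by
      rw [expand N a z hz1, expand N b z hz1]
      have hr : ∀ c : ℕ → ℂ, ∑ k ∈ range N, acorr N c k * z ^ k
          = acorr N c 0 + ∑ k ∈ Ico 1 N, acorr N c k * z ^ k := by
        intro c
        rw [Finset.range_eq_Ico, Finset.sum_eq_sum_Ico_succ_bot hN]
        simp
      rw [hr a, hr b]
      have hzero : (∑ k ∈ Ico 1 N, acorr N a k * z ^ k)
          + ∑ k ∈ Ico 1 N, acorr N b k * z ^ k = 0 := by
        rw [← Finset.sum_add_distrib]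
        exact Finset.sum_eq_zero hIco
      have hzero' : (starRingEnd ℂ) (∑ k ∈ Ico 1 N, acorr N a k * z ^ k)
          + (starRingEnd ℂ) (∑ k ∈ Ico 1 N, acorr N b k * z ^ k) = 0 := by
        rw [← map_add, hzero, map_zero]
      rw [ha, hb]
      linear_combination hzero + hzero'
    have hA : (starRingEnd ℂ) (poly N a z) * poly N a z = ((‖poly N a z‖ ^ 2 : ℝ) : ℂ) := by
      rw [mul_comm, Complex.mul_conj]
      norm_cast
      simp [Complex.normSq_eq_norm_sq]
    have hB : (starRingEnd ℂ) (poly N b z) * poly N b z = ((‖poly N b z‖ ^ 2 : ℝ) : ℂ) := by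
      rw [mul_comm, Complex.mul_conj]
      norm_cast
      simp [Complex.normSq_eq_norm_sq]
    rw [hA, hB] at hsum
    have : ‖poly N a z‖ ^ 2 + ‖poly N b z‖ ^ 2 = 2 * E := by
      exact_mod_cast hsum
    nlinarith [sq_nonneg ‖poly N b z‖]
end

section
/- In the main construction F(z) = ω1·A(z^k)C(z^l) + ω2·B(z^k)D(z^l)·z^m with |ω1|=|ω2|=1, the bound |F(z)|^2 + |G(z)|^2 = (ρ_a(0)+ρ_b(0))(ρ_c(0)+ρ_d(0)) on the unit circle holds uniformly in (ω1, ω2); hence the sequence f obtained for any choice of unit-modulus data symbols ω1, ω2 ∈ {e^{iπ/4}, e^{3iπ/4}, e^{−iπ/4}, e^{−3iπ/4}} is a complementary sequence with the same energy bound, so information can be modulated onto (ω1, ω2) without changing the 3 dB PAPR guarantee. -/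
open Complex Finset

lemma unit_conj_mul {w : ℂ} (h : ‖w‖ = 1) : (starRingEnd ℂ) w * w = 1 := by
  rw [Complex.conj_mul', h]; norm_num

lemma pair_split (N : ℕ) (g : ℕ → ℕ → ℂ) :
    ∑ i ∈ Finset.range N, ∑ j ∈ Finset.range N, g i j
      = (∑ i ∈ Finset.range N, g i i)
        + ∑ k ∈ Finset.Ico 1 N, ∑ i ∈ Finset.range (N - k), g i (i + k)
        + ∑ k ∈ Finset.Ico 1 N, ∑ i ∈ Finset.range (N - k), g (i + k) i := by
  rw [← Finset.sum_product']
  have h1 : ∑ k ∈ Finset.Ico 1 N, ∑ i ∈ Finset.range (N - k), g i (i + k)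
      = ∑ p ∈ (Finset.range N ×ˢ Finset.range N).filter (fun p => p.1 < p.2), g p.1 p.2 := by
    rw [Finset.sum_sigma']
    apply Finset.sum_nbij' (fun p => (p.2, p.2 + p.1)) (fun p => ⟨p.2 - p.1, p.1⟩)
    · intro p hp
      simp only [Finset.mem_sigma, Finset.mem_Ico, Finset.mem_range] at hp
      simp only [Finset.mem_filter, Finset.mem_product, Finset.mem_range]
      omega
    · intro p hp
      simp only [Finset.mem_filter, Finset.mem_product, Finset.mem_range] at hp
      simp only [Finset.mem_sigma, Finset.mem_Ico, Finset.mem_range]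
      omega
    · intro p hp
      simp only [Finset.mem_sigma, Finset.mem_Ico, Finset.mem_range] at hp
      simp
    · intro p hp
      simp only [Finset.mem_filter, Finset.mem_product, Finset.mem_range] at hp
      simp only []
      ext <;> simp <;> omega
    · intro p hp; rfl
  have h2 : ∑ k ∈ Finset.Ico 1 N, ∑ i ∈ Finset.range (N - k), g (i + k) i
      = ∑ p ∈ (Finset.range N ×ˢ Finset.range N).filter (fun p => p.2 < p.1), g p.1 p.2 := by
    rw [Finset.sum_sigma']
    apply Finset.sum_nbij' (fun p => (p.2 + p.1, p.2)) (fun p => ⟨p.1 - p.2, p.2⟩)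
    · intro p hp
      simp only [Finset.mem_sigma, Finset.mem_Ico, Finset.mem_range] at hp
      simp only [Finset.mem_filter, Finset.mem_product, Finset.mem_range]
      omega
    · intro p hp
      simp only [Finset.mem_filter, Finset.mem_product, Finset.mem_range] at hp
      simp only [Finset.mem_sigma, Finset.mem_Ico, Finset.mem_range]
      omega
    · intro p hp
      simp only [Finset.mem_sigma, Finset.mem_Ico, Finset.mem_range] at hp
      simp
    · intro p hp
      simp only [Finset.mem_filter, Finset.mem_product, Finset.mem_range] at hp
      ext <;> simp <;> omega
    · intro p hp; rfl
  have h0 : ∑ i ∈ Finset.range N, g i i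
      = ∑ p ∈ (Finset.range N ×ˢ Finset.range N).filter (fun p => p.1 = p.2), g p.1 p.2 := by
    apply Finset.sum_nbij' (fun i => (i, i)) (fun p => p.1)
    · intro i hi; simp at hi ⊢; omega
    · intro p hp; simp at hp ⊢; omega
    · intro i hi; rfl
    · intro p hp; simp only [Finset.mem_filter, Finset.mem_product] at hp
      ext <;> simp [hp.2]
    · intro i hi; rfl
  rw [h0, h1, h2]
  rw [← Finset.sum_filter_add_sum_filter_not (Finset.range N ×ˢ Finset.range N) (fun p => p.1 < p.2)]
  rw [← Finset.sum_filter_add_sum_filter_not ((Finset.range N ×ˢ Finset.range N).filter (fun p => ¬ p.1 < p.2)) (fun p => p.1 = p.2)]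
  rw [Finset.filter_filter, Finset.filter_filter]
  have e1 : Finset.filter (fun p : ℕ × ℕ => ¬p.1 < p.2 ∧ p.1 = p.2) (Finset.range N ×ˢ Finset.range N)
      = Finset.filter (fun p => p.1 = p.2) (Finset.range N ×ˢ Finset.range N) :=
    Finset.filter_congr (fun x _ => by by_cases h : x.1 = x.2 <;> simp [h] <;> omega)
  have e2 : Finset.filter (fun p : ℕ × ℕ => ¬p.1 < p.2 ∧ ¬p.1 = p.2) (Finset.range N ×ˢ Finset.range N)
      = Finset.filter (fun p => p.2 < p.1) (Finset.range N ×ˢ Finset.range N) :=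
    Finset.filter_congr (fun x _ => by omega)
  rw [e1, e2]; ring

lemma conj_mul_self (N : ℕ) (a : ℕ → ℂ) (u : ℂ) (hu : ‖u‖ = 1) :
    (starRingEnd ℂ) (poly N a u) * poly N a u
      = acorr N a 0 + ∑ k ∈ Finset.Ico 1 N, (acorr N a k * u ^ k
          + (starRingEnd ℂ) (acorr N a k * u ^ k)) := by
  have huc : (starRingEnd ℂ) u * u = 1 := unit_conj_mul hu
  have hii : ∀ i : ℕ, ((starRingEnd ℂ) u) ^ i * u ^ i = 1 := by
    intro i; rw [← mul_pow, huc, one_pow]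
  unfold poly
  rw [map_sum]
  simp only [map_mul, map_pow]
  rw [Finset.sum_mul_sum]
  rw [pair_split N (fun i j => ((starRingEnd ℂ) (a i) * ((starRingEnd ℂ) u) ^ i) * (a j * u ^ j)),
    Finset.sum_add_distrib, ← add_assoc]
  congr 1
  · congr 1
    · unfold acorr
      simp only [Nat.sub_zero]
      apply Finset.sum_congr rfl
      intro i _
      rw [Nat.add_zero]
      calc (starRingEnd ℂ) (a i) * ((starRingEnd ℂ) u) ^ i * (a i * u ^ i)
          = ((starRingEnd ℂ) (a i) * a i) * (((starRingEnd ℂ) u) ^ i * u ^ i) := by ring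
        _ = (starRingEnd ℂ) (a i) * a i := by rw [hii]; ring
    · apply Finset.sum_congr rfl
      intro k _
      unfold acorr
      rw [Finset.sum_mul]
      apply Finset.sum_congr rfl
      intro i _
      calc (starRingEnd ℂ) (a i) * ((starRingEnd ℂ) u) ^ i * (a (i + k) * u ^ (i + k))
          = ((starRingEnd ℂ) (a i) * a (i + k) * u ^ k) * (((starRingEnd ℂ) u) ^ i * u ^ i) := by
            rw [pow_add]; ring
        _ = (starRingEnd ℂ) (a i) * a (i + k) * u ^ k := by rw [hii]; ring
  · apply Finset.sum_congr rfl
    intro k _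
    unfold acorr
    rw [map_sum, Finset.sum_mul]
    apply Finset.sum_congr rfl
    intro i _
    rw [map_mul]
    calc (starRingEnd ℂ) (a (i + k)) * ((starRingEnd ℂ) u) ^ (i + k) * (a i * u ^ i)
        = ((starRingEnd ℂ) ((starRingEnd ℂ) (a i)) * (starRingEnd ℂ) (a (i + k))
            * ((starRingEnd ℂ) u) ^ k) * (((starRingEnd ℂ) u) ^ i * u ^ i) := by
          rw [pow_add, Complex.conj_conj]; ring
      _ = _ := by rw [hii]; ring

lemma gcp_sum (N : ℕ) (a b : ℕ → ℂ) (hab : IsGCP N a b) (u : ℂ) (hu : ‖u‖ = 1) :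
    (starRingEnd ℂ) (poly N a u) * poly N a u + (starRingEnd ℂ) (poly N b u) * poly N b u
      = acorr N a 0 + acorr N b 0 := by
  rw [conj_mul_self N a u hu, conj_mul_self N b u hu]
  have h : ∑ k ∈ Finset.Ico 1 N, (acorr N a k * u ^ k + (starRingEnd ℂ) (acorr N a k * u ^ k))
      + ∑ k ∈ Finset.Ico 1 N, (acorr N b k * u ^ k + (starRingEnd ℂ) (acorr N b k * u ^ k)) = 0 := by
    rw [← Finset.sum_add_distrib]
    apply Finset.sum_eq_zero
    intro k hk
    have hk1 : 0 < k := by simp only [Finset.mem_Ico] at hk; omega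
    have h0 := hab k hk1
    have e : acorr N b k = -acorr N a k := by linear_combination h0
    rw [e]
    simp only [neg_mul, map_neg]
    ring
  linear_combination h

lemma rev_conj_poly (M : ℕ) (d : ℕ → ℂ) (w : ℂ) (hw : ‖w‖ = 1) :
    poly M (fun i => (starRingEnd ℂ) (d (M - 1 - i))) w
      = w ^ (M - 1) * (starRingEnd ℂ) (poly M d w) := by
  have hwc : (starRingEnd ℂ) w * w = 1 := unit_conj_mul hw
  unfold poly
  rw [map_sum, Finset.mul_sum]
  apply Finset.sum_nbij' (fun i => M - 1 - i) (fun i => M - 1 - i)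
  · intro i hi; simp at hi ⊢; omega
  · intro i hi; simp at hi ⊢; omega
  · intro i hi; simp at hi ⊢; omega
  · intro i hi; simp at hi ⊢; omega
  · intro i hi
    simp only [Finset.mem_range] at hi
    rw [map_mul, map_pow]
    have h2 : w ^ (M - 1) = w ^ (M - 1 - i) * w ^ i := by
      rw [← pow_add]; congr 1; omega
    rw [h2]
    calc (starRingEnd ℂ) (d (M - 1 - i)) * w ^ i
        = (w ^ i * (starRingEnd ℂ) (d (M - 1 - i))) * 1 ^ (M - 1 - i) := by ring
      _ = (w ^ i * (starRingEnd ℂ) (d (M - 1 - i))) * ((starRingEnd ℂ) w * w) ^ (M - 1 - i) := by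
          rw [hwc]
      _ = _ := by rw [mul_pow]; ring

lemma key_alg (A A' B B' C C' D D' ω1 ω1' ω2 ω2' t t' s s' : ℂ)
    (hP : ω1' * ω1 = 1) (hQ : ω2' * ω2 = 1) (hT : t' * t = 1) (hS : s' * s = 1) :
    (ω1' * A' * C' + ω2' * B' * D' * t') * (ω1 * A * C + ω2 * B * D * t)
      + (ω1' * A' * (s' * D) - ω2' * B' * (s' * C) * t')
          * (ω1 * A * (s * D') - ω2 * B * (s * C') * t)
      = (A' * A + B' * B) * (C' * C + D' * D) := by
  linear_combination (A'*A*C'*C + s'*s*A'*A*D*D') * hP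
    + (t'*t*B'*B*D'*D + s'*s*t'*t*B'*B*C*C') * hQ
    + (B'*B*D'*D + B'*B*C*C') * hT
    + (A'*A*D*D' + t'*t*B'*B*C*C' - ω1'*ω2*t*A'*B*C'*D - ω2'*ω1*t'*A*B'*C*D') * hS

lemma norm_qpsk {w : ℂ}
    (hw : w ∈ ({Complex.exp (Real.pi * Complex.I / 4), Complex.exp (3 * Real.pi * Complex.I / 4),
        Complex.exp (-(Real.pi * Complex.I) / 4),
        Complex.exp (-(3 * Real.pi * Complex.I) / 4)} : Set ℂ)) : ‖w‖ = 1 := by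
  simp only [Set.mem_insert_iff, Set.mem_singleton_iff] at hw
  rcases hw with h | h | h | h <;> subst h <;>
    simp [Complex.norm_exp, Complex.div_re, Complex.mul_re,
      Complex.normSq, Complex.I_re, Complex.I_im, Complex.ofReal_re, Complex.ofReal_im]

theorem qpsk_modulated_cs (N M : ℕ) (a b c d : ℕ → ℂ)
    (hab : IsGCP N a b) (hcd : IsGCP M c d) (k l m : ℤ) :
    ∀ ω1 ω2 : ℂ,
      ω1 ∈ ({Complex.exp (Real.pi * Complex.I / 4), Complex.exp (3 * Real.pi * Complex.I / 4),
              Complex.exp (-(Real.pi * Complex.I) / 4),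
              Complex.exp (-(3 * Real.pi * Complex.I) / 4)} : Set ℂ) →
      ω2 ∈ ({Complex.exp (Real.pi * Complex.I / 4), Complex.exp (3 * Real.pi * Complex.I / 4),
              Complex.exp (-(Real.pi * Complex.I) / 4),
              Complex.exp (-(3 * Real.pi * Complex.I) / 4)} : Set ℂ) →
      ∀ z : ℂ, ‖z‖ = 1 →
        ((‖ω1 * poly N a (z ^ k) * poly M c (z ^ l) +
              ω2 * poly N b (z ^ k) * poly M d (z ^ l) * z ^ m‖ ^ 2 +
            ‖ω1 * poly N a (z ^ k) *
                poly M (fun i => (starRingEnd ℂ) (d (M - 1 - i))) (z ^ l) -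
              ω2 * poly N b (z ^ k) *
                poly M (fun i => (starRingEnd ℂ) (c (M - 1 - i))) (z ^ l) * z ^ m‖ ^ 2 : ℝ) : ℂ) =
          (acorr N a 0 + acorr N b 0) * (acorr M c 0 + acorr M d 0) := by
  intro ω1 ω2 hω1 hω2 z hz
  have hω1n : ‖ω1‖ = 1 := norm_qpsk hω1
  have hω2n : ‖ω2‖ = 1 := norm_qpsk hω2
  have hu : ‖z ^ k‖ = 1 := by rw [norm_zpow, hz, one_zpow]
  have hw : ‖z ^ l‖ = 1 := by rw [norm_zpow, hz, one_zpow]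
  have ht : ‖z ^ m‖ = 1 := by rw [norm_zpow, hz, one_zpow]
  have hs : ‖(z ^ l) ^ (M - 1)‖ = 1 := by rw [norm_pow, hw, one_pow]
  push_cast
  rw [← Complex.conj_mul', ← Complex.conj_mul']
  rw [rev_conj_poly M d (z ^ l) hw, rev_conj_poly M c (z ^ l) hw]
  set A := poly N a (z ^ k)
  set B := poly N b (z ^ k)
  set C := poly M c (z ^ l)
  set D := poly M d (z ^ l)
  simp only [map_add, map_sub, map_mul, Complex.conj_conj]
  have hk := key_alg A ((starRingEnd ℂ) A) B ((starRingEnd ℂ) B) C ((starRingEnd ℂ) C)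
    D ((starRingEnd ℂ) D) ω1 ((starRingEnd ℂ) ω1) ω2 ((starRingEnd ℂ) ω2)
    (z ^ m) ((starRingEnd ℂ) (z ^ m)) ((z ^ l) ^ (M - 1))
    ((starRingEnd ℂ) ((z ^ l) ^ (M - 1)))
    (unit_conj_mul hω1n) (unit_conj_mul hω2n) (unit_conj_mul ht) (unit_conj_mul hs)
  have hg : ((starRingEnd ℂ) A * A + (starRingEnd ℂ) B * B) *
      ((starRingEnd ℂ) C * C + (starRingEnd ℂ) D * D)
      = (acorr N a 0 + acorr N b 0) * (acorr M c 0 + acorr M d 0) := by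
    rw [gcp_sum N a b hab (z ^ k) hu, gcp_sum M c d hcd (z ^ l) hw]
  linear_combination hk + hg
end
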